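/- Let d, n be integers with 1 ≤ d ≤ n, and let D : {1,...,n} → ℝ≥0 satisfy D_n ≤ 1 and D_i ≤ 1 + ((1-p_i)/p_i) D_{i+1} with p_i = min(i/(2d), 1/2). Then Σ_{i=1}^{n} D_i ≤ (4^d · n^2) / 2. -/

import Mathlib

theorem stmt_12 (d n : ℕ) (hd : 1 ≤ d) (hdn : d ≤ n)
    (D p : ℕ → ℝ)
    (hp : ∀ i, p i = min ((i : ℝ) / (2 * d)) (1 / 2))
    (hD0 : ∀ i, 1 ≤ i → i ≤ n → 0 ≤ D i)
    (hDn : D n ≤ 1)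
    (hrec : ∀ i, 1 ≤ i → i < n → D i ≤ 1 + ((1 - p i) / p i) * D (i + 1)) :
    ∑ i ∈ Finset.Icc 1 n, D i ≤ (4 ^ d * (n : ℝ) ^ 2) / 2 := by
  have hd' : (1:ℝ) ≤ d := by exact_mod_cast hd
  set f : ℕ → ℝ := fun m => (2 * d - m) / m with hf
  -- basic facts about f
  have hf1 : ∀ m, 1 ≤ m → m < d → 1 ≤ f m := by
    intro m hm1 hmd
    have hm1' : (1:ℝ) ≤ m := by exact_mod_cast hm1
    have hmd' : (m:ℝ) < d := by exact_mod_cast hmd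
    rw [hf]
    rw [le_div_iff₀ (by linarith)]
    linarith
  -- products over Ico i d are ≥ 1
  have hQ1 : ∀ i, 1 ≤ i → 1 ≤ ∏ m ∈ Finset.Ico i d, f m := by
    intro i hi
    have h := Finset.prod_le_prod (s := Finset.Ico i d) (f := fun _ => (1:ℝ)) (g := f)
      (by intros; norm_num)
      (by intro m hm; rw [Finset.mem_Ico] at hm; exact hf1 m (le_trans hi hm.1) hm.2)
    simpa using h
  -- the product over Ico 1 d is at most 4^(d-1)
  have hQtop : ∏ m ∈ Finset.Ico 1 d, f m ≤ 4 ^ (d - 1) := by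
    have hsplit : ∏ m ∈ Finset.Ico 1 d, f m =
        (∏ m ∈ Finset.Ico 1 d, ((2 * d - m : ℕ) : ℝ)) / ∏ m ∈ Finset.Ico 1 d, (m : ℝ) := by
      rw [← Finset.prod_div_distrib]
      apply Finset.prod_congr rfl
      intro m hm
      rw [Finset.mem_Ico] at hm
      rw [hf]
      have : m ≤ 2 * d := by omega
      push_cast [Nat.cast_sub this]
      ring_nf
    rw [hsplit]
    have hnum : ∏ m ∈ Finset.Ico 1 d, (2 * d - m) = (2 * d - 1).descFactorial (d - 1) := by
      rw [Nat.descFactorial_eq_prod_range]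
      rw [Finset.prod_Ico_eq_prod_range]
      apply Finset.prod_congr rfl
      intro j hj
      rw [Finset.mem_range] at hj
      omega
    have hden : ∏ m ∈ Finset.Ico 1 d, m = Nat.factorial (d - 1) := by
      have h := Finset.prod_Ico_id_eq_factorial (d - 1)
      rwa [show d - 1 + 1 = d by omega] at h
    have hnat : ∏ m ∈ Finset.Ico 1 d, (2 * d - m) ≤ 4 ^ (d - 1) * ∏ m ∈ Finset.Ico 1 d, m := by
      rw [hnum, hden, Nat.descFactorial_eq_factorial_mul_choose]
      have h1 : (2 * d - 1).choose (d - 1) ≤ 4 ^ (d - 1) := by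
        have h2 := Nat.choose_middle_le_pow (d - 1)
        have he : 2 * (d - 1) + 1 = 2 * d - 1 := by omega
        rwa [he] at h2
      calc Nat.factorial (d-1) * (2*d-1).choose (d-1)
          ≤ Nat.factorial (d-1) * 4 ^ (d-1) := Nat.mul_le_mul le_rfl h1
        _ = 4 ^ (d-1) * Nat.factorial (d-1) := by ring
    have hdenpos : (0:ℝ) < ∏ m ∈ Finset.Ico 1 d, (m : ℝ) := by
      apply Finset.prod_pos
      intro m hm
      rw [Finset.mem_Ico] at hm
      exact_mod_cast hm.1
    rw [div_le_iff₀ hdenpos, ← Nat.cast_prod, ← Nat.cast_prod]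
    exact_mod_cast hnat
  -- key claim by downward induction
  have key : ∀ k i, 1 ≤ i → i ≤ n → n - i ≤ k →
      D i ≤ ((n:ℝ) - i + 1) * ∏ m ∈ Finset.Ico i d, f m := by
    intro k
    induction k with
    | zero =>
      intro i hi1 hin hk
      have hin' : i = n := by omega
      have he : Finset.Ico i d = ∅ := Finset.Ico_eq_empty (by omega)
      rw [he, hin']
      simp
      linarith
    | succ k ih =>
      intro i hi1 hin hk
      rcases eq_or_lt_of_le hin with h | hlt
      · have he : Finset.Ico i d = ∅ := Finset.Ico_eq_empty (by omega)
        rw [he, h]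
        simp
        linarith
      · have hrec' := hrec i hi1 hlt
        have hIH := ih (i + 1) (by omega) (by omega) (by omega)
        have hi1' : (1:ℝ) ≤ i := by exact_mod_cast hi1
        have hiltn : (i:ℝ) < n := by exact_mod_cast hlt
        by_cases hcase : d ≤ i
        · -- p i = 1/2
          have hpi : p i = 1/2 := by
            rw [hp]
            have : (1:ℝ)/2 ≤ (i:ℝ) / (2 * d) := by
              rw [div_le_div_iff₀ (by norm_num) (by positivity)]
              have : (d:ℝ) ≤ i := by exact_mod_cast hcase
              linarith
            exact min_eq_right this
          have he1 : Finset.Ico i d = ∅ := Finset.Ico_eq_empty (by omega)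
          have he2 : Finset.Ico (i+1) d = ∅ := Finset.Ico_eq_empty (by omega)
          rw [he1]
          rw [he2] at hIH
          simp at hIH ⊢
          rw [hpi] at hrec'
          norm_num at hrec'
          push_cast at hIH ⊢
          linarith
        · -- i < d, p i = i/(2d)
          push_neg at hcase
          have hid : (i:ℝ) < d := by exact_mod_cast hcase
          have hpi : p i = (i:ℝ) / (2 * d) := by
            rw [hp]
            apply min_eq_left
            rw [div_le_div_iff₀ (by positivity) (by norm_num)]
            linarith
          have hfac : (1 - p i) / p i = f i := by
            have hi0 : (i:ℝ) ≠ 0 := Nat.cast_ne_zero.mpr (by omega)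
            have hd0 : (d:ℝ) ≠ 0 := by positivity
            rw [hpi, hf]
            field_simp
          rw [hfac] at hrec'
          have hsplit : ∏ m ∈ Finset.Ico i d, f m = f i * ∏ m ∈ Finset.Ico (i+1) d, f m :=
            Finset.prod_eq_prod_Ico_succ_bot hcase f
          have hQ : 1 ≤ ∏ m ∈ Finset.Ico (i+1) d, f m := by
            rcases eq_or_lt_of_le (show i + 1 ≤ d from hcase) with h | h
            · have : Finset.Ico (i+1) d = ∅ := Finset.Ico_eq_empty (by omega)
              rw [this]; simp
            · exact hQ1 (i+1) (by omega)
          have hfi : 1 ≤ f i := hf1 i hi1 hcase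
          have hD1 : 0 ≤ D (i+1) := hD0 (i+1) (by omega) (by omega)
          have step : f i * D (i+1) ≤ f i * (((n:ℝ) - ((i+1 : ℕ) : ℝ) + 1) * ∏ m ∈ Finset.Ico (i+1) d, f m) :=
            mul_le_mul_of_nonneg_left hIH (by linarith)
          rw [hsplit]
          push_cast at step ⊢
          have h1fq : 1 ≤ f i * ∏ m ∈ Finset.Ico (i+1) d, f m := by
            nlinarith
          nlinarith [hQ, hfi]
  -- conclude
  have hbound : ∀ i ∈ Finset.Icc 1 n, D i ≤ (4:ℝ) ^ d * n / 2 := by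
    intro i hi
    rw [Finset.mem_Icc] at hi
    have h1 := key (n - i) i hi.1 hi.2 le_rfl
    have hQle : ∏ m ∈ Finset.Ico i d, f m ≤ 4 ^ (d - 1) := by
      by_cases hid : i ≤ d
      · have hcons := Finset.prod_Ico_consecutive f hi.1 hid
        have h1 : 1 ≤ ∏ m ∈ Finset.Ico 1 i, f m := by
          have h := Finset.prod_le_prod (s := Finset.Ico 1 i) (f := fun _ => (1:ℝ)) (g := f)
            (by intros; norm_num)
            (by intro m hm; rw [Finset.mem_Ico] at hm; exact hf1 m hm.1 (by omega))
          simpa using h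
        have h2 : 1 ≤ ∏ m ∈ Finset.Ico i d, f m := by
          rcases eq_or_lt_of_le hid with h | h
          · subst h; simp
          · exact hQ1 i hi.1
        calc ∏ m ∈ Finset.Ico i d, f m
            ≤ (∏ m ∈ Finset.Ico 1 i, f m) * ∏ m ∈ Finset.Ico i d, f m := by nlinarith
          _ = ∏ m ∈ Finset.Ico 1 d, f m := hcons
          _ ≤ 4 ^ (d - 1) := hQtop
      · have : Finset.Ico i d = ∅ := Finset.Ico_eq_empty (by omega)
        rw [this]; simp
        exact one_le_pow₀ (by norm_num)
    have hQ0 : (0:ℝ) ≤ ∏ m ∈ Finset.Ico i d, f m := by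
      rcases le_or_gt i d with h | h
      · rcases eq_or_lt_of_le h with h' | h'
        · subst h'; simp
        · linarith [hQ1 i hi.1]
      · have : Finset.Ico i d = ∅ := Finset.Ico_eq_empty (by omega)
        rw [this]; simp
    have hni : ((n:ℝ) - i + 1) ≤ n := by
      have : (1:ℝ) ≤ i := by exact_mod_cast hi.1
      linarith
    have hni0 : (0:ℝ) ≤ (n:ℝ) - i + 1 := by
      have : (i:ℝ) ≤ n := by exact_mod_cast hi.2
      linarith
    have h4 : (4:ℝ) ^ (d-1) ≤ 4 ^ d / 2 := by
      have he : (4:ℝ) ^ d = 4 ^ (d-1) * 4 := by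
        rw [← pow_succ]
        congr 1
        omega
      rw [he]
      nlinarith [pow_pos (show (0:ℝ) < 4 by norm_num) (d-1)]
    calc D i ≤ ((n:ℝ) - i + 1) * ∏ m ∈ Finset.Ico i d, f m := h1
      _ ≤ (n:ℝ) * 4 ^ (d-1) := by
          apply mul_le_mul hni hQle hQ0 (by positivity)
      _ ≤ (n:ℝ) * (4 ^ d / 2) := by
          apply mul_le_mul_of_nonneg_left h4 (by positivity)
      _ = 4 ^ d * n / 2 := by ring
  calc ∑ i ∈ Finset.Icc 1 n, D i ≤ ∑ i ∈ Finset.Icc 1 n, ((4:ℝ) ^ d * n / 2) :=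
        Finset.sum_le_sum hbound
    _ = n * ((4:ℝ) ^ d * n / 2) := by
        rw [Finset.sum_const, Nat.card_Icc]
        simp
    _ = (4 ^ d * (n:ℝ) ^ 2) / 2 := by ring
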